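/- Let I=⟨A,A?,R,R?⟩ be an incomplete argumentation framework, S⊆A∪A? a set of arguments, j a verification status, w an argument with w∉A∪A?, and I_att=⟨A∪A?∪{w}, ∅, R, R?∪{(w,a) | a∈A?}⟩. Then for every uncertain attack e∈R?: e∈RE⁺(I,S,j) if and only if e∈RE⁺(I_att,S∪{w},j), and e∈RE⁻(I,S,j) if and only if e∈RE⁻(I_att,S∪{w},j). -/

import Mathlib

universe u

/-- An abstract argumentation framework: a set of arguments with an attack relation. -/
structure AF (α : Type u) where
  args : Set α
  att : Set (α × α)

namespace AF

variable {α : Type u}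

/-- `S⁺_F`: arguments attacked by `S`. -/
def plusSet (F : AF α) (S : Set α) : Set α := {a | a ∈ F.args ∧ ∃ b ∈ S, (b, a) ∈ F.att}

/-- `S⁻_F`: arguments attacking `S`. -/
def minusSet (F : AF α) (S : Set α) : Set α := {a | a ∈ F.args ∧ ∃ b ∈ S, (a, b) ∈ F.att}

/-- `S` is conflict-free in `F`. -/
def confFree (F : AF α) (S : Set α) : Prop := S ∩ F.plusSet S = ∅

/-- `S` defends `a` in `F`: every attacker of `a` is attacked by `S`. -/
def defends (F : AF α) (S : Set α) (a : α) : Prop := ∀ b, (b, a) ∈ F.att → b ∈ F.plusSet S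

/-- The characteristic function `Γ_F(S)`: arguments defended by `S`. -/
def Γ (F : AF α) (S : Set α) : Set α := {a | a ∈ F.args ∧ F.defends S a}

/-- Admissible: conflict-free and self-defending. -/
def isAd (F : AF α) (S : Set α) : Prop := S ⊆ F.args ∧ F.confFree S ∧ S ⊆ F.Γ S

/-- Stable: conflict-free and attacking exactly the outside. -/
def isSt (F : AF α) (S : Set α) : Prop := S ⊆ F.args ∧ F.confFree S ∧ F.plusSet S = F.args \ S

/-- Complete: admissible and containing all defended arguments. -/
def isCo (F : AF α) (S : Set α) : Prop := F.isAd S ∧ F.Γ S ⊆ S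

/-- Grounded: ⊆-minimal complete. -/
def isGr (F : AF α) (S : Set α) : Prop := F.isCo S ∧ ∀ T, F.isCo T → T ⊆ S → T = S

/-- Preferred: ⊆-maximal admissible. -/
def isPr (F : AF α) (S : Set α) : Prop := F.isAd S ∧ ∀ T, F.isAd T → S ⊆ T → S = T

end AF

/-- The five common semantics. -/
inductive Sem : Type
  | ad | st | co | gr | pr
deriving DecidableEq

/-- `S` is a `σ`-extension of `F`. -/
def extOf {α : Type u} : Sem → AF α → Set α → Prop
  | .ad => AF.isAd
  | .st => AF.isSt
  | .co => AF.isCo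
  | .gr => AF.isGr
  | .pr => AF.isPr

/-- An incomplete argumentation framework (data part). -/
structure IAF (α : Type u) where
  A : Set α
  Aq : Set α
  R : Set (α × α)
  Rq : Set (α × α)

namespace IAF

variable {α : Type u}

/-- Well-formedness: `A`,`A?` disjoint; `R`,`R?` disjoint subsets of `(A∪A?)×(A∪A?)`. -/
def WF (I : IAF α) : Prop :=
  Disjoint I.A I.Aq ∧ Disjoint I.R I.Rq ∧
  I.R ⊆ (I.A ∪ I.Aq) ×ˢ (I.A ∪ I.Aq) ∧
  I.Rq ⊆ (I.A ∪ I.Aq) ×ˢ (I.A ∪ I.Aq)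

/-- `cert(I)`: the AF projected on the certain part. -/
def cert (I : IAF α) : AF α := ⟨I.A, I.R ∩ I.A ×ˢ I.A⟩

/-- `I'` is a partial completion of `I`. -/
def PartOf (I' I : IAF α) : Prop :=
  I'.WF ∧ I.A ⊆ I'.A ∧ I'.A ⊆ I.A ∪ I.Aq ∧
  I.R ∩ (I'.A ∪ I'.Aq) ×ˢ (I'.A ∪ I'.Aq) ⊆ I'.R ∧
  I'.R ⊆ I.R ∪ I.Rq ∧ I'.Aq ⊆ I.Aq ∧ I'.Rq ⊆ I.Rq

/-- `F` is a completion of `I`. -/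
def IsCompletion (I : IAF α) (F : AF α) : Prop := ∃ I' : IAF α, I'.PartOf I ∧ F = I'.cert

/-- `I + R₀` for a set of uncertain attacks. -/
def addR (I : IAF α) (R0 : Set (α × α)) : IAF α := ⟨I.A, I.Aq, I.R ∪ R0, I.Rq \ R0⟩

/-- `I − R₀` for a set of uncertain attacks. -/
def subR (I : IAF α) (R0 : Set (α × α)) : IAF α := ⟨I.A, I.Aq, I.R, I.Rq \ R0⟩

/-- `I + A₀` for a set of uncertain arguments. -/
def addA (I : IAF α) (A0 : Set α) : IAF α := ⟨I.A ∪ A0, I.Aq \ A0, I.R, I.Rq⟩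

/-- `I − A₀` for a set of uncertain arguments. -/
def subA (I : IAF α) (A0 : Set α) : IAF α :=
  ⟨I.A, I.Aq \ A0,
   I.R \ {p | p ∈ I.R ∪ I.Rq ∧ (p.1 ∈ A0 ∨ p.2 ∈ A0)},
   I.Rq \ {p | p ∈ I.R ∪ I.Rq ∧ (p.1 ∈ A0 ∨ p.2 ∈ A0)}⟩

/-- `S⁺_I`. -/
def plusI (I : IAF α) (S : Set α) : Set α := {a | a ∈ I.A ∪ I.Aq ∧ ∃ b ∈ S, (b, a) ∈ I.R}

/-- `S⁻_I`. -/
def minusI (I : IAF α) (S : Set α) : Set α := {a | a ∈ I.A ∪ I.Aq ∧ ∃ b ∈ S, (a, b) ∈ I.R}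

/-- `S^∼_I`. -/
def simI (I : IAF α) (S : Set α) : Set α :=
  {a | a ∈ I.A ∪ I.Aq ∧ ∀ b ∈ S, (b, a) ∉ I.R ∪ I.Rq}

end IAF

/-- An element of an IAF: either an argument or an attack. -/
inductive Elem (α : Type u) : Type u
  | arg (a : α)
  | att (r : α × α)

/-- `e` is an uncertain element of `I`, i.e. `e ∈ A? ∪ R?`. -/
def IAF.isUnc {α : Type u} (I : IAF α) : Elem α → Prop
  | .arg a => a ∈ I.Aq
  | .att r => r ∈ I.Rq

/-- `I + {e}`. -/
def IAF.addE {α : Type u} (I : IAF α) : Elem α → IAF α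
  | .arg a => I.addA {a}
  | .att r => I.addR {r}

/-- `I − {e}`. -/
def IAF.subE {α : Type u} (I : IAF α) : Elem α → IAF α
  | .arg a => I.subA {a}
  | .att r => I.subR {r}

/-- `e` is the unique uncertain element of `I`, i.e. `A? ∪ R? = {e}`. -/
def onlyUnc {α : Type u} (I : IAF α) : Elem α → Prop
  | .arg a => I.Aq = {a} ∧ I.Rq = ∅
  | .att r => I.Aq = ∅ ∧ I.Rq = {r}

/-- A verification status: a semantics together with true/false. -/
abbrev VStatus := Sem × Bool

/-- `S` has verification status `j` in the AF `F`. -/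
def hasStatus {α : Type u} (F : AF α) (S : Set α) (j : VStatus) : Prop :=
  cond j.2 (extOf j.1 F S) (¬ extOf j.1 F S)

/-- `S` is stable-`j` w.r.t. `I`. -/
def IAF.stableJ {α : Type u} (I : IAF α) (S : Set α) (j : VStatus) : Prop :=
  ∀ F, I.IsCompletion F → hasStatus F S j

/-- `S` is stable-`σ` w.r.t. `I`. -/
def IAF.stableSem {α : Type u} (I : IAF α) (S : Set α) (σ : Sem) : Prop :=
  I.stableJ S (σ, true) ∨ I.stableJ S (σ, false)

/-- `RE⁺(I,S,j)`: uncertain elements whose addition is `j`-relevant for `S` w.r.t. `I`. -/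
def REplus {α : Type u} (I : IAF α) (S : Set α) (j : VStatus) : Set (Elem α) :=
  {e | I.isUnc e ∧ ∃ I' : IAF α, I'.PartOf I ∧ onlyUnc I' e ∧
    hasStatus (I'.addE e).cert S j ∧ ¬ hasStatus (I'.subE e).cert S j}

/-- `RE⁻(I,S,j)`: uncertain elements whose removal is `j`-relevant for `S` w.r.t. `I`. -/
def REminus {α : Type u} (I : IAF α) (S : Set α) (j : VStatus) : Set (Elem α) :=
  {e | I.isUnc e ∧ ∃ I' : IAF α, I'.PartOf I ∧ onlyUnc I' e ∧
    hasStatus (I'.subE e).cert S j ∧ ¬ hasStatus (I'.addE e).cert S j}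

/-- `e` is `σ`-irrelevant for `S` w.r.t. `I`. -/
def irrelevant {α : Type u} (I : IAF α) (S : Set α) (σ : Sem) (e : Elem α) : Prop :=
  e ∉ REplus I S (σ, true) ∧ e ∉ REminus I S (σ, true) ∧
  e ∉ REplus I S (σ, false) ∧ e ∉ REminus I S (σ, false)

/-- `PosVer_σ(I,S) = true`. -/
def PosVer {α : Type u} (σ : Sem) (I : IAF α) (S : Set α) : Prop :=
  ∃ F, I.IsCompletion F ∧ extOf σ F S

/-- `NecVer_σ(I,S) = true`. -/
def NecVer {α : Type u} (σ : Sem) (I : IAF α) (S : Set α) : Prop :=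
  ∀ F, I.IsCompletion F → extOf σ F S

/-- `SRE⁺(I,S,j)`: uncertain elements whose addition is strongly `j`-relevant. -/
def SREplus {α : Type u} (I : IAF α) (S : Set α) (j : VStatus) : Set (Elem α) :=
  {e | I.isUnc e ∧ ∀ I' : IAF α, I'.PartOf (I.subE e) → ¬ I'.stableJ S j}

/-- `SRE⁻(I,S,j)`: uncertain elements whose removal is strongly `j`-relevant. -/
def SREminus {α : Type u} (I : IAF α) (S : Set α) (j : VStatus) : Set (Elem α) :=
  {e | I.isUnc e ∧ ∀ I' : IAF α, I'.PartOf (I.addE e) → ¬ I'.stableJ S j}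

/-- The `OutRel(I,S,(a,b))` predicate. -/
def OutRel {α : Type u} (I : IAF α) (S : Set α) (r : α × α) : Prop :=
  (I.minusI {r.2} \ {r.1}) ∩ I.simI S = ∅ ∧
  PosVer Sem.co
    ((I.addR {p | p ∈ I.Rq ∧ p.1 ∈ S ∧ p.2 ∈ I.minusI {r.2} \ {r.1}}).subR
      {p | p ∈ I.Rq ∧ p.1 ≠ r.1 ∧ p.2 = r.2}) S


section Core

variable {α : Type u} {F G : AF α} {B : Set α} {w : α}

lemma plus_eq
    (hG : G.args = B ∪ {w})
    (hFB : F.args ⊆ B)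
    (hagree : ∀ p : α × α, p.1 ∈ F.args → p.2 ∈ F.args → (p ∈ G.att ↔ p ∈ F.att))
    (hwD : ∀ d ∈ B, d ∉ F.args → (w, d) ∈ G.att)
    (hwnot : ∀ x, (x, w) ∉ G.att)
    (hwonly : ∀ x, (w, x) ∈ G.att → x ∈ B ∧ x ∉ F.args)
    (T : Set α) (hT : T ⊆ F.args) :
    G.plusSet (T ∪ {w}) = F.plusSet T ∪ (B \ F.args) := by
  ext a
  simp only [AF.plusSet, Set.mem_setOf_eq, Set.mem_union, Set.mem_diff,
    Set.mem_singleton_iff, hG]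
  constructor
  · rintro ⟨ha, b, hb | rfl, hba⟩
    · by_cases haF : a ∈ F.args
      · exact Or.inl ⟨haF, b, hb, (hagree (b, a) (hT hb) haF).1 hba⟩
      · rcases ha with haB | rfl
        · exact Or.inr ⟨haB, haF⟩
        · exact absurd hba (hwnot b)
    · exact Or.inr (hwonly a hba)
  · rintro (⟨ha, b, hb, hba⟩ | ⟨haB, haF⟩)
    · exact ⟨Or.inl (hFB ha), b, Or.inl hb, (hagree (b, a) (hT hb) ha).2 hba⟩
    · exact ⟨Or.inl haB, w, Or.inr rfl, hwD a haB haF⟩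

end Core

section Core2
variable {α : Type u} {F G : AF α} {B : Set α} {w : α}

lemma gamma_eq
    (hw : w ∉ B)
    (hG : G.args = B ∪ {w})
    (hFB : F.args ⊆ B)
    (hFatt : F.att ⊆ F.args ×ˢ F.args)
    (hGatt : G.att ⊆ G.args ×ˢ G.args)
    (hagree : ∀ p : α × α, p.1 ∈ F.args → p.2 ∈ F.args → (p ∈ G.att ↔ p ∈ F.att))
    (hwD : ∀ d ∈ B, d ∉ F.args → (w, d) ∈ G.att)
    (hwnot : ∀ x, (x, w) ∉ G.att)
    (hwonly : ∀ x, (w, x) ∈ G.att → x ∈ B ∧ x ∉ F.args)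
    (T : Set α) (hT : T ⊆ F.args) :
    G.Γ (T ∪ {w}) = F.Γ T ∪ {w} := by
  have hplus := plus_eq hG hFB hagree hwD hwnot hwonly T hT
  have hFp : F.plusSet T ⊆ F.args := fun a ha => ha.1
  have hGw : w ∉ F.plusSet T ∪ (B \ F.args) := by
    rintro (h | h)
    · exact hw (hFB (hFp h))
    · exact hw h.1
  ext a
  simp only [AF.Γ, Set.mem_setOf_eq, Set.mem_union, Set.mem_singleton_iff, hG]
  constructor
  · rintro ⟨ha | rfl, hdef⟩
    · by_cases haF : a ∈ F.args
      · refine Or.inl ⟨haF, fun b hba => ?_⟩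
        have hbF : b ∈ F.args := (hFatt hba).1
        have := hdef b ((hagree (b, a) hbF haF).2 hba)
        rw [hplus] at this
        rcases this with h | h
        · exact h
        · exact absurd hbF h.2
      · exfalso
        have := hdef w (hwD a ha haF)
        rw [hplus] at this
        exact hGw this
    · exact Or.inr rfl
  · rintro (⟨haF, hdef⟩ | rfl)
    · refine ⟨Or.inl (hFB haF), fun b hba => ?_⟩
      rw [hplus]
      rcases hGatt hba with ⟨hb, -⟩
      rw [hG] at hb
      rcases hb with hbB | rfl
      · by_cases hbF : b ∈ F.args
        · exact Or.inl (hdef b ((hagree (b, a) hbF haF).1 hba))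
        · exact Or.inr ⟨hbB, hbF⟩
      · exact absurd haF (hwonly a hba).2
    · exact ⟨Or.inr rfl, fun b hbw => absurd hbw (hwnot b)⟩

end Core2

section Help
variable {α : Type u} {F : AF α} {S : Set α}

lemma extOf_sub : ∀ {σ : Sem}, extOf σ F S → S ⊆ F.args
  | .ad, h => h.1
  | .st, h => h.1
  | .co, h => h.1.1
  | .gr, h => h.1.1.1
  | .pr, h => h.1.1

lemma extOf_cf : ∀ {σ : Sem}, extOf σ F S → F.confFree S
  | .ad, h => h.2.1
  | .st, h => h.2.1
  | .co, h => h.1.2.1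
  | .gr, h => h.1.1.2.1
  | .pr, h => h.1.2.1

end Help

section CoreMain
variable {α : Type u} {F G : AF α} {B : Set α} {w : α}

lemma core_ext
    (hw : w ∉ B)
    (hG : G.args = B ∪ {w})
    (hFB : F.args ⊆ B)
    (hFatt : F.att ⊆ F.args ×ˢ F.args)
    (hGatt : G.att ⊆ G.args ×ˢ G.args)
    (hagree : ∀ p : α × α, p.1 ∈ F.args → p.2 ∈ F.args → (p ∈ G.att ↔ p ∈ F.att))
    (hwD : ∀ d ∈ B, d ∉ F.args → (w, d) ∈ G.att)
    (hwnot : ∀ x, (x, w) ∉ G.att)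
    (hwonly : ∀ x, (w, x) ∈ G.att → x ∈ B ∧ x ∉ F.args)
    (S : Set α) (hS : S ⊆ B) :
    ∀ σ : Sem, extOf σ F S ↔ extOf σ G (S ∪ {w}) := by
  have hplus := plus_eq hG hFB hagree hwD hwnot hwonly
  have hgam := gamma_eq hw hG hFB hFatt hGatt hagree hwD hwnot hwonly
  intro σ
  by_cases hSF : S ⊆ F.args
  swap
  · -- degenerate: both sides false
    obtain ⟨d, hdS, hdF⟩ := Set.not_subset.mp hSF
    constructor
    · intro h; exact absurd (extOf_sub h hdS) hdF
    · intro h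
      have hcf := extOf_cf h
      have hd : d ∈ (S ∪ {w}) ∩ G.plusSet (S ∪ {w}) :=
        ⟨Or.inl hdS, ⟨hG ▸ Or.inl (hS hdS), w, Or.inr rfl, hwD d (hS hdS) hdF⟩⟩
      rw [hcf] at hd
      exact hd.elim
  -- main case
  have hwF : w ∉ F.args := fun h => hw (hFB h)
  have hcfset : ∀ T, T ⊆ F.args →
      (T ∪ {w}) ∩ (F.plusSet T ∪ (B \ F.args)) = T ∩ F.plusSet T := by
    intro T hT
    ext a
    simp only [Set.mem_inter_iff, Set.mem_union, Set.mem_singleton_iff, Set.mem_diff]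
    constructor
    · rintro ⟨ha | rfl, hp | hd⟩
      · exact ⟨ha, hp⟩
      · exact absurd (hT ha) hd.2
      · exact absurd (hFB hp.1) hw
      · exact absurd hd.1 hw
    · rintro ⟨h1, h2⟩
      exact ⟨Or.inl h1, Or.inl h2⟩
  have hcf : ∀ T, T ⊆ F.args → (F.confFree T ↔ G.confFree (T ∪ {w})) := by
    intro T hT
    unfold AF.confFree
    rw [hplus T hT, hcfset T hT]
  have hsub : ∀ T : Set α, T ⊆ F.args → T ∪ {w} ⊆ G.args := by
    intro T hT
    rw [hG]
    rintro a (ha | ha)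
    · exact Or.inl (hFB (hT ha))
    · exact Or.inr ha
  have hadT : ∀ T, T ⊆ F.args → (F.isAd T ↔ G.isAd (T ∪ {w})) := by
    intro T hT
    constructor
    · rintro ⟨-, hcf', hΓ⟩
      refine ⟨hsub T hT, (hcf T hT).1 hcf', ?_⟩
      rw [hgam T hT]
      rintro a (ha | ha)
      · exact Or.inl (hΓ ha)
      · exact Or.inr ha
    · rintro ⟨-, hcf', hΓ⟩
      refine ⟨hT, (hcf T hT).2 hcf', fun a ha => ?_⟩
      have h2 := hΓ (Or.inl ha)
      rw [hgam T hT] at h2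
      rcases h2 with h2 | h2
      · exact h2
      · rw [Set.mem_singleton_iff] at h2
        subst h2
        exact absurd (hT ha) hwF
  have hcancel : ∀ X Y : Set α, X ⊆ F.args → Y ⊆ F.args →
      X ∪ (B \ F.args) = Y ∪ (B \ F.args) → X = Y := by
    intro X Y hX hY h
    ext a
    constructor <;> intro ha
    · rcases (Set.ext_iff.mp h a).mp (Or.inl ha) with h' | h'
      · exact h'
      · exact absurd (hX ha) h'.2
    · rcases (Set.ext_iff.mp h a).mpr (Or.inl ha) with h' | h'
      · exact h'
      · exact absurd (hY ha) h'.2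
  have hargsdiff : ∀ T, T ⊆ F.args →
      G.args \ (T ∪ {w}) = (F.args \ T) ∪ (B \ F.args) := by
    intro T hT
    ext a
    simp only [hG, Set.mem_diff, Set.mem_union, Set.mem_singleton_iff, not_or]
    constructor
    · rintro ⟨ha | rfl, hT', hwne⟩
      · by_cases haF : a ∈ F.args
        · exact Or.inl ⟨haF, hT'⟩
        · exact Or.inr ⟨ha, haF⟩
      · exact absurd rfl hwne
    · rintro (⟨haF, hT'⟩ | ⟨haB, haF⟩)
      · exact ⟨Or.inl (hFB haF), hT', fun h => hw (h ▸ hFB haF)⟩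
      · exact ⟨Or.inl haB, fun h => haF (hT h), fun h => hw (h ▸ haB)⟩
  have hstT : ∀ T, T ⊆ F.args → (F.isSt T ↔ G.isSt (T ∪ {w})) := by
    intro T hT
    constructor
    · rintro ⟨-, hcf', heq⟩
      refine ⟨hsub T hT, (hcf T hT).1 hcf', ?_⟩
      rw [hplus T hT, hargsdiff T hT, heq]
    · rintro ⟨-, hcf', heq⟩
      refine ⟨hT, (hcf T hT).2 hcf', ?_⟩
      rw [hplus T hT, hargsdiff T hT] at heq
      exact hcancel _ _ (fun a ha => ha.1) (fun a ha => ha.1) heq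
  have hcoT : ∀ T, T ⊆ F.args → (F.isCo T ↔ G.isCo (T ∪ {w})) := by
    intro T hT
    constructor
    · rintro ⟨had, hΓ⟩
      refine ⟨(hadT T hT).1 had, ?_⟩
      rw [hgam T hT]
      rintro a (ha | ha)
      · exact Or.inl (hΓ ha)
      · exact Or.inr ha
    · rintro ⟨had, hΓ⟩
      refine ⟨(hadT T hT).2 had, fun a ha => ?_⟩
      have h2 := hΓ (by rw [hgam T hT]; exact Or.inl ha)
      rcases h2 with h2 | h2
      · exact h2
      · rw [Set.mem_singleton_iff] at h2
        subst h2
        exact absurd ha.1 hwF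
  -- shape of admissible/complete sets of G containing w
  have hshape : ∀ T', T' ⊆ G.args → G.confFree T' → w ∈ T' →
      T' \ {w} ⊆ F.args ∧ T' = (T' \ {w}) ∪ {w} := by
    intro T' hT'G hT'cf hwT'
    constructor
    · rintro a ⟨haT', hane⟩
      have haG := hT'G haT'
      rw [hG] at haG
      rcases haG with haB | haw
      · by_contra haF
        have : a ∈ T' ∩ G.plusSet T' :=
          ⟨haT', ⟨hG ▸ Or.inl haB, w, hwT', hwD a haB haF⟩⟩
        rw [hT'cf] at this
        exact this
      · exact absurd haw hane
    · rw [Set.diff_union_self]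
      exact (Set.union_eq_self_of_subset_right (Set.singleton_subset_iff.mpr hwT')).symm
  have hwGam : ∀ T', w ∈ G.Γ T' := by
    intro T'
    exact ⟨hG ▸ Or.inr rfl, fun b hbw => absurd hbw (hwnot b)⟩
  have hmemT : ∀ T : Set α, T ⊆ F.args → ∀ a ∈ S, a ∈ T ∪ {w} → a ∈ T := by
    intro T hT a haS ha
    rcases ha with h | h
    · exact h
    · rw [Set.mem_singleton_iff] at h
      subst h
      exact absurd (hSF haS) hwF
  cases σ
  · exact hadT S hSF
  · exact hstT S hSF
  · exact hcoT S hSF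
  · -- grounded
    constructor
    · rintro ⟨hco, hmin⟩
      refine ⟨(hcoT S hSF).1 hco, fun T' hT'co hT'sub => ?_⟩
      have hwT' : w ∈ T' := hT'co.2 (hwGam T')
      obtain ⟨hT0F, hT0eq⟩ := hshape T' hT'co.1.1 hT'co.1.2.1 hwT'
      rw [hT0eq] at hT'co
      have hfco : F.isCo (T' \ {w}) := (hcoT _ hT0F).2 hT'co
      have hT0S : T' \ {w} ⊆ S := by
        rintro a ⟨haT', hane⟩
        rcases hT'sub haT' with h | h
        · exact h
        · exact absurd h hane
      rw [hT0eq, hmin _ hfco hT0S]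
    · rintro ⟨hco, hmin⟩
      refine ⟨(hcoT S hSF).2 hco, fun T hTco hTS => ?_⟩
      have hTF : T ⊆ F.args := hTco.1.1
      have := hmin (T ∪ {w}) ((hcoT T hTF).1 hTco)
        (Set.union_subset_union_left _ hTS)
      ext a
      constructor
      · intro ha; exact hTS ha
      · intro ha
        exact hmemT T hTF a ha ((Set.ext_iff.mp this a).mpr (Or.inl ha))
  · -- preferred
    constructor
    · rintro ⟨had, hmax⟩
      refine ⟨(hadT S hSF).1 had, fun T' hT'ad hT'sup => ?_⟩
      have hwT' : w ∈ T' := hT'sup (Or.inr rfl)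
      obtain ⟨hT0F, hT0eq⟩ := hshape T' hT'ad.1 hT'ad.2.1 hwT'
      rw [hT0eq] at hT'ad ⊢
      have hfad : F.isAd (T' \ {w}) := (hadT _ hT0F).2 hT'ad
      have hST0 : S ⊆ T' \ {w} := by
        intro a haS
        exact ⟨hT'sup (Or.inl haS), fun h => hwF (h ▸ hSF haS)⟩
      rw [hmax _ hfad hST0]
    · rintro ⟨had, hmax⟩
      refine ⟨(hadT S hSF).2 had, fun T hTad hST => ?_⟩
      have hTF : T ⊆ F.args := hTad.1
      have := hmax (T ∪ {w}) ((hadT T hTF).1 hTad)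
        (Set.union_subset_union_left _ hST)
      ext a
      constructor
      · intro ha
        exact hmemT T hTF a ha ((Set.ext_iff.mp this a).mp (Or.inl ha))
      · intro ha
        rcases (Set.ext_iff.mp this a).mpr (Or.inl ha) with h | h
        · exact h
        · rw [Set.mem_singleton_iff] at h
          subst h
          exact absurd (hTF ha) hwF

end CoreMain

section Dead
variable {α : Type u} {G₁ G₂ : AF α} {w : α}

lemma dead_ext (x y : α)
    (hargs : G₂.args = G₁.args)
    (hatt : G₂.att = G₁.att ∪ {(x, y)})
    (hatt1 : G₁.att ⊆ G₁.args ×ˢ G₁.args)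
    (hwun : ∀ z, (z, w) ∉ G₂.att)
    (hwin : w ∈ G₁.args)
    (hdead : (w, y) ∈ G₁.att ∨ (w, x) ∈ G₁.att)
    (S : Set α) (hwS : w ∈ S) :
    ∀ σ, extOf σ G₁ S ↔ extOf σ G₂ S := by
  have hwun1 : ∀ z, (z, w) ∉ G₁.att := fun z h =>
    hwun z (by rw [hatt]; exact Or.inl h)
  have hwplus1 : ∀ T, w ∉ G₁.plusSet T := by
    rintro T ⟨-, b, -, hbw⟩
    exact hwun1 b hbw
  have hwplus2 : ∀ T, w ∉ G₂.plusSet T := by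
    rintro T ⟨-, b, -, hbw⟩
    exact hwun b hbw
  have hwG1 : ∀ T, w ∈ G₁.Γ T := fun T => ⟨hwin, fun b h => absurd h (hwun1 b)⟩
  have hwG2 : ∀ T, w ∈ G₂.Γ T := fun T => ⟨hargs ▸ hwin, fun b h => absurd h (hwun b)⟩
  -- plus and Γ agree on good sets
  have hplus : ∀ T : Set α, (x ∈ T → y ∈ G₁.plusSet T) → G₂.plusSet T = G₁.plusSet T := by
    intro T hcov
    ext a
    simp only [AF.plusSet, Set.mem_setOf_eq, hargs, hatt, Set.mem_union,
      Set.mem_singleton_iff, Prod.mk.injEq]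
    constructor
    · rintro ⟨ha, b, hb, h | ⟨rfl, rfl⟩⟩
      · exact ⟨ha, b, hb, h⟩
      · exact hcov hb
    · rintro ⟨ha, b, hb, h⟩
      exact ⟨ha, b, hb, Or.inl h⟩
  have hkey : ∀ T, w ∈ T → (x ∈ T → (w, x) ∉ G₁.att) →
      G₂.plusSet T = G₁.plusSet T ∧ G₂.Γ T = G₁.Γ T := by
    intro T hwT hxT
    have hcov : x ∈ T → y ∈ G₁.plusSet T := by
      intro hxTmem
      rcases hdead with hdy | hdx
      · exact ⟨(hatt1 hdy).2, w, hwT, hdy⟩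
      · exact absurd hdx (hxT hxTmem)
    have hpe := hplus T hcov
    refine ⟨hpe, ?_⟩
    ext a
    simp only [AF.Γ, Set.mem_setOf_eq, hargs]
    refine and_congr_right fun ha => ?_
    unfold AF.defends
    rw [hpe]
    simp only [hatt, Set.mem_union, Set.mem_singleton_iff, Prod.mk.injEq]
    constructor
    · intro h b hba
      exact h b (Or.inl hba)
    · intro h b hba
      rcases hba with hba | ⟨rfl, rfl⟩
      · exact h b hba
      · -- b = x, a = y : need x ∈ G₁.plusSet T
        rcases hdead with hdy | hdx
        · -- y is dead: but then defends₁ y is false; derive from h a contradiction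
          exact absurd (h w hdy) (hwplus1 T)
        · -- x is dead, so x ∉ T and x ∈ plus T via w
          exact ⟨(hatt1 hdx).2, w, hwT, hdx⟩
    -- done hkey
  have hcf : ∀ T, w ∈ T → (x ∈ T → (w, x) ∉ G₁.att) →
      (G₁.confFree T ↔ G₂.confFree T) := by
    intro T hwT hxT
    unfold AF.confFree
    rw [(hkey T hwT hxT).1]
  have hcfbad1 : ∀ T, w ∈ T → x ∈ T → (w, x) ∈ G₁.att → ¬ G₁.confFree T := by
    intro T hwT hxT hdx h
    have : x ∈ T ∩ G₁.plusSet T := ⟨hxT, ⟨(hatt1 hdx).2, w, hwT, hdx⟩⟩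
    rw [h] at this
    exact this
  have hcfbad2 : ∀ T, w ∈ T → x ∈ T → (w, x) ∈ G₁.att → ¬ G₂.confFree T := by
    intro T hwT hxT hdx h
    have : x ∈ T ∩ G₂.plusSet T :=
      ⟨hxT, ⟨hargs ▸ (hatt1 hdx).2, w, hwT, by rw [hatt]; exact Or.inl hdx⟩⟩
    rw [h] at this
    exact this
  have had : ∀ T, w ∈ T → (G₁.isAd T ↔ G₂.isAd T) := by
    intro T hwT
    by_cases hbad : x ∈ T ∧ (w, x) ∈ G₁.att
    · constructor
      · rintro ⟨-, hc, -⟩; exact absurd hc (hcfbad1 T hwT hbad.1 hbad.2)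
      · rintro ⟨-, hc, -⟩; exact absurd hc (hcfbad2 T hwT hbad.1 hbad.2)
    · have hxT : x ∈ T → (w, x) ∉ G₁.att := fun h1 h2 => hbad ⟨h1, h2⟩
      obtain ⟨hpe, hge⟩ := hkey T hwT hxT
      unfold AF.isAd
      rw [hargs, hge, hcf T hwT hxT]
  have hco : ∀ T, G₁.isCo T ↔ G₂.isCo T := by
    intro T
    by_cases hwT : w ∈ T
    · by_cases hbad : x ∈ T ∧ (w, x) ∈ G₁.att
      · constructor
        · rintro ⟨⟨-, hc, -⟩, -⟩; exact absurd hc (hcfbad1 T hwT hbad.1 hbad.2)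
        · rintro ⟨⟨-, hc, -⟩, -⟩; exact absurd hc (hcfbad2 T hwT hbad.1 hbad.2)
      · have hxT : x ∈ T → (w, x) ∉ G₁.att := fun h1 h2 => hbad ⟨h1, h2⟩
        obtain ⟨hpe, hge⟩ := hkey T hwT hxT
        unfold AF.isCo
        rw [hge, had T hwT]
    · constructor
      · rintro ⟨-, hg⟩; exact absurd (hg (hwG1 T)) hwT
      · rintro ⟨-, hg⟩; exact absurd (hg (hwG2 T)) hwT
  intro σ
  cases σ
  · exact had S hwS
  · -- stable
    show G₁.isSt S ↔ G₂.isSt S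
    by_cases hbad : x ∈ S ∧ (w, x) ∈ G₁.att
    · constructor
      · rintro ⟨-, hc, -⟩; exact absurd hc (hcfbad1 S hwS hbad.1 hbad.2)
      · rintro ⟨-, hc, -⟩; exact absurd hc (hcfbad2 S hwS hbad.1 hbad.2)
    · have hxS : x ∈ S → (w, x) ∉ G₁.att := fun h1 h2 => hbad ⟨h1, h2⟩
      obtain ⟨hpe, -⟩ := hkey S hwS hxS
      unfold AF.isSt
      rw [hargs, hpe, hcf S hwS hxS]
  · exact hco S
  · show G₁.isGr S ↔ G₂.isGr S
    unfold AF.isGr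
    constructor
    · rintro ⟨h1, h2⟩
      exact ⟨(hco S).1 h1, fun T hT => h2 T ((hco T).2 hT)⟩
    · rintro ⟨h1, h2⟩
      exact ⟨(hco S).2 h1, fun T hT => h2 T ((hco T).1 hT)⟩
  · show G₁.isPr S ↔ G₂.isPr S
    unfold AF.isPr
    constructor
    · rintro ⟨h1, h2⟩
      refine ⟨(had S hwS).1 h1, fun T hT hST => ?_⟩
      exact h2 T ((had T (hST hwS)).2 hT) hST
    · rintro ⟨h1, h2⟩
      refine ⟨(had S hwS).2 h1, fun T hT hST => ?_⟩
      exact h2 T ((had T (hST hwS)).1 hT) hST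

end Dead

section Glue
variable {α : Type u}

lemma hasStatus_iff {F G : AF α} {S S' : Set α}
    (h : ∀ σ, extOf σ F S ↔ extOf σ G S') (j : VStatus) :
    hasStatus F S j ↔ hasStatus G S' j := by
  obtain ⟨σ, b⟩ := j
  cases b
  · exact not_congr (h σ)
  · exact h σ

lemma core_ext' (B A' : Set α) (w : α) (R' R'' E : Set (α × α)) (S : Set α)
    (hw : w ∉ B) (hA' : A' ⊆ B) (hS : S ⊆ B)
    (hagree0 : ∀ p : α × α, p.1 ∈ A' → p.2 ∈ A' → (p ∈ R'' ↔ p ∈ R'))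
    (hwD0 : ∀ d ∈ B, d ∉ A' → (w, d) ∈ R'')
    (hwnot0 : ∀ z, (z, w) ∉ R'' ∪ E)
    (hwonly0 : ∀ z, (w, z) ∈ R'' ∪ E → z ∈ B ∧ z ∉ A') :
    ∀ σ, extOf σ (⟨A', (R' ∪ E) ∩ A' ×ˢ A'⟩ : AF α) S ↔
      extOf σ (⟨B ∪ {w}, (R'' ∪ E) ∩ (B ∪ {w}) ×ˢ (B ∪ {w})⟩ : AF α) (S ∪ {w}) := by
  apply core_ext hw rfl hA' Set.inter_subset_right Set.inter_subset_right ?_ ?_ ?_ ?_ S hS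
  · intro p hp1 hp2
    constructor
    · rintro ⟨hp, -⟩
      refine ⟨?_, hp1, hp2⟩
      rcases hp with hp | hp
      · exact Or.inl ((hagree0 p hp1 hp2).1 hp)
      · exact Or.inr hp
    · rintro ⟨hp, -⟩
      refine ⟨?_, Or.inl (hA' hp1), Or.inl (hA' hp2)⟩
      rcases hp with hp | hp
      · exact Or.inl ((hagree0 p hp1 hp2).2 hp)
      · exact Or.inr hp
  · intro d hd hd'
    exact ⟨Or.inl (hwD0 d hd hd'), Or.inr rfl, Or.inl hd⟩
  · intro z hz
    exact hwnot0 z hz.1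
  · intro z hz
    exact hwonly0 z hz.1

lemma fwd (I : IAF α) (S : Set α) (w : α)
    (hWF : I.WF) (hS : S ⊆ I.A ∪ I.Aq) (hw : w ∉ I.A ∪ I.Aq)
    (e : α × α) (he : e ∈ I.Rq)
    (I' : IAF α) (hP : I'.PartOf I) (h1 : I'.Aq = ∅) (h2 : I'.Rq = {e}) :
    ∃ I'' : IAF α,
      I''.PartOf ⟨I.A ∪ I.Aq ∪ {w}, ∅, I.R, I.Rq ∪ {p | ∃ a ∈ I.Aq, p = (w, a)}⟩ ∧
      I''.Aq = ∅ ∧ I''.Rq = {e} ∧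
      (∀ σ, extOf σ (I'.addR {e}).cert S ↔ extOf σ (I''.addR {e}).cert (S ∪ {w})) ∧
      (∀ σ, extOf σ (I'.subR {e}).cert S ↔ extOf σ (I''.subR {e}).cert (S ∪ {w})) := by
  obtain ⟨hdA, hdR, hRsub, hRqsub⟩ := hWF
  obtain ⟨⟨hd1, hd2, hr3, hr4⟩, hA1, hA2, hR1, hR2, hAq', hRq'⟩ := hP
  have heA' : e ∈ I'.A ×ˢ I'.A := by
    have := hr4 (show e ∈ I'.Rq by rw [h2]; rfl)
    rwa [h1, Set.union_empty] at this
  have heB : e ∈ (I.A ∪ I.Aq) ×ˢ (I.A ∪ I.Aq) := hRqsub he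
  have henR' : e ∉ I'.R := fun h => Set.disjoint_left.mp hd2 h (by rw [h2]; rfl)
  have henR : e ∉ I.R := Set.disjoint_right.mp hdR he
  set R'' : Set (α × α) :=
    I'.R ∪ I.R ∪ {p | p.1 = w ∧ p.2 ∈ I.A ∪ I.Aq ∧ p.2 ∉ I'.A} with hR''def
  have hR''B : R'' ⊆ (I.A ∪ I.Aq ∪ {w}) ×ˢ (I.A ∪ I.Aq ∪ {w}) := by
    rintro p ((hp | hp) | hp)
    · rcases hR2 hp with h | h
      · exact ⟨Or.inl (hRsub h).1, Or.inl (hRsub h).2⟩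
      · exact ⟨Or.inl (hRqsub h).1, Or.inl (hRqsub h).2⟩
    · exact ⟨Or.inl (hRsub hp).1, Or.inl (hRsub hp).2⟩
    · exact ⟨Or.inr hp.1, Or.inl hp.2.1⟩
  have henR'' : e ∉ R'' := by
    rintro ((hp | hp) | hp)
    · exact henR' hp
    · exact henR hp
    · exact hw (hp.1 ▸ heB.1)
  have hagree0 : ∀ p : α × α, p.1 ∈ I'.A → p.2 ∈ I'.A → (p ∈ R'' ↔ p ∈ I'.R) := by
    intro p hp1 hp2
    constructor
    · rintro ((hp | hp) | hp)
      · exact hp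
      · exact hR1 ⟨hp, by rw [h1, Set.union_empty]; exact ⟨hp1, hp2⟩⟩
      · exact absurd (hp.1 ▸ hA2 hp1) hw
    · intro hp
      exact Or.inl (Or.inl hp)
  have hwD0 : ∀ d ∈ I.A ∪ I.Aq, d ∉ I'.A → (w, d) ∈ R'' := by
    intro d hd hd'
    exact Or.inr ⟨rfl, hd, hd'⟩
  have hwnotR : ∀ z, (z, w) ∉ R'' := by
    rintro z ((hp | hp) | hp)
    · rcases hR2 hp with h | h
      · exact hw (hRsub h).2
      · exact hw (hRqsub h).2
    · exact hw (hRsub hp).2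
    · exact hw hp.2.1
  have hwonlyR : ∀ z, (w, z) ∈ R'' → z ∈ I.A ∪ I.Aq ∧ z ∉ I'.A := by
    rintro z ((hp | hp) | hp)
    · rcases hR2 hp with h | h
      · exact absurd (hRsub h).1 hw
      · exact absurd (hRqsub h).1 hw
    · exact absurd (hRsub hp).1 hw
    · exact hp.2
  have hew1 : e.1 ≠ w := fun h => hw (h ▸ heB.1)
  have hew2 : e.2 ≠ w := fun h => hw (h ▸ heB.2)
  refine ⟨⟨I.A ∪ I.Aq ∪ {w}, ∅, R'', {e}⟩,
    ⟨⟨Set.disjoint_empty _, Set.disjoint_singleton_right.mpr henR'', ?_, ?_⟩,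
      subset_rfl, fun a ha => Or.inl ha, fun p hp => Or.inl (Or.inr hp.1), ?_,
      subset_rfl, Set.singleton_subset_iff.mpr (Or.inl he)⟩,
    rfl, rfl, ?_, ?_⟩
  · rw [Set.union_empty]
    exact hR''B
  · rw [Set.union_empty]
    exact Set.singleton_subset_iff.mpr ⟨Or.inl heB.1, Or.inl heB.2⟩
  · -- R'' ⊆ Iatt.R ∪ Iatt.Rq
    rintro p ((hp | hp) | hp)
    · rcases hR2 hp with h | h
      · exact Or.inl h
      · exact Or.inr (Or.inl h)
    · exact Or.inl hp
    · refine Or.inr (Or.inr ?_)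
      have hp2q : p.2 ∈ I.Aq := by
        rcases hp.2.1 with h | h
        · exact absurd (hA1 h) hp.2.2
        · exact h
      exact ⟨p.2, hp2q, Prod.ext hp.1 rfl⟩
  · -- addR equivalence
    have := core_ext' (I.A ∪ I.Aq) I'.A w I'.R R'' {e} S hw hA2 hS hagree0 hwD0
      (by rintro z (hz | hz)
          · exact hwnotR z hz
          · rw [Set.mem_singleton_iff] at hz
            exact hew2 (congrArg Prod.snd hz).symm)
      (by rintro z (hz | hz)
          · exact hwonlyR z hz
          · rw [Set.mem_singleton_iff] at hz
            exact absurd (congrArg Prod.fst hz).symm hew1)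
    exact this
  · -- subR equivalence
    have := core_ext' (I.A ∪ I.Aq) I'.A w I'.R R'' ∅ S hw hA2 hS hagree0 hwD0
      (by rintro z (hz | hz)
          · exact hwnotR z hz
          · exact hz.elim)
      (by rintro z (hz | hz)
          · exact hwonlyR z hz
          · exact hz.elim)
    simp only [Set.union_empty] at this
    exact this

end Glue

section Bwd
variable {α : Type u}

lemma bwd (I : IAF α) (S : Set α) (w : α)
    (hWF : I.WF) (hS : S ⊆ I.A ∪ I.Aq) (hw : w ∉ I.A ∪ I.Aq)
    (e : α × α) (he : e ∈ I.Rq)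
    (I'' : IAF α)
    (hP : I''.PartOf ⟨I.A ∪ I.Aq ∪ {w}, ∅, I.R, I.Rq ∪ {p | ∃ a ∈ I.Aq, p = (w, a)}⟩)
    (h1 : I''.Aq = ∅) (h2 : I''.Rq = {e}) :
    (∀ σ, extOf σ (I''.addR {e}).cert (S ∪ {w}) ↔ extOf σ (I''.subR {e}).cert (S ∪ {w})) ∨
    ∃ I' : IAF α, I'.PartOf I ∧ I'.Aq = ∅ ∧ I'.Rq = {e} ∧
      (∀ σ, extOf σ (I'.addR {e}).cert S ↔ extOf σ (I''.addR {e}).cert (S ∪ {w})) ∧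
      (∀ σ, extOf σ (I'.subR {e}).cert S ↔ extOf σ (I''.subR {e}).cert (S ∪ {w})) := by
  obtain ⟨hdA, hdR, hRsub, hRqsub⟩ := hWF
  obtain ⟨A'', Aq'', R'', Rq''⟩ := I''
  obtain ⟨⟨hd1, hd2, hr3, hr4⟩, hA1, hA2, hR1, hR2, hAq', hRq'⟩ := hP
  simp only at h1 h2 hA1 hA2 hR1 hR2 hAq' hRq' hd1 hd2 hr3 hr4
  subst h1 h2
  have hA'' : A'' = I.A ∪ I.Aq ∪ {w} := by
    refine Set.Subset.antisymm ?_ hA1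
    intro a ha
    rcases hA2 ha with h | h
    · exact h
    · exact h.elim
  subst hA''
  have heB : e ∈ (I.A ∪ I.Aq) ×ˢ (I.A ∪ I.Aq) := hRqsub he
  have hew1 : e.1 ≠ w := fun h => hw (h ▸ heB.1)
  have hew2 : e.2 ≠ w := fun h => hw (h ▸ heB.2)
  have henR'' : e ∉ R'' := fun h => Set.disjoint_left.mp hd2 h rfl
  have hIRsub : I.R ⊆ R'' := by
    intro p hp
    refine hR1 ⟨hp, ?_⟩
    have := hRsub hp
    exact ⟨Or.inl (Or.inl this.1), Or.inl (Or.inl this.2)⟩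
  have hWonly : ∀ z, (w, z) ∈ R'' → z ∈ I.Aq := by
    intro z hz
    rcases hR2 hz with h | h | h
    · exact absurd (hRsub h).1 hw
    · exact absurd (hRqsub h).1 hw
    · obtain ⟨a, haq, heq⟩ := h
      have : z = a := congrArg Prod.snd heq
      exact this ▸ haq
  have hwnotR : ∀ z, (z, w) ∉ R'' := by
    intro z hz
    rcases hR2 hz with h | h | h
    · exact hw (hRsub h).2
    · exact hw (hRqsub h).2
    · obtain ⟨a, haq, heq⟩ := h
      have : w = a := congrArg Prod.snd heq
      exact hw (Or.inr (this ▸ haq))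
  by_cases hdead : (w, e.1) ∈ R'' ∨ (w, e.2) ∈ R''
  · -- dead endpoint: adding/removing e never matters
    left
    have hePA : e ∈ (I.A ∪ I.Aq ∪ {w}) ×ˢ (I.A ∪ I.Aq ∪ {w}) :=
      ⟨Or.inl heB.1, Or.inl heB.2⟩
    have hatt : ((⟨I.A ∪ I.Aq ∪ {w}, ∅, R'', {e}⟩ : IAF α).addR {e}).cert.att =
        ((⟨I.A ∪ I.Aq ∪ {w}, ∅, R'', {e}⟩ : IAF α).subR {e}).cert.att ∪ {(e.1, e.2)} := by
      ext p
      simp only [IAF.cert, IAF.addR, IAF.subR, Set.mem_inter_iff, Set.mem_union,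
        Set.mem_singleton_iff]
      constructor
      · rintro ⟨hp | hp, hP⟩
        · exact Or.inl ⟨hp, hP⟩
        · right
          rw [hp]
      · rintro (⟨hp, hP⟩ | hp)
        · exact ⟨Or.inl hp, hP⟩
        · rw [show p = e from hp]
          exact ⟨Or.inr rfl, hePA⟩
    have hdx : ∀ σ, extOf σ ((⟨I.A ∪ I.Aq ∪ {w}, ∅, R'', {e}⟩ : IAF α).subR {e}).cert (S ∪ {w}) ↔
        extOf σ ((⟨I.A ∪ I.Aq ∪ {w}, ∅, R'', {e}⟩ : IAF α).addR {e}).cert (S ∪ {w}) := by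
      refine dead_ext (G₁ := ((⟨I.A ∪ I.Aq ∪ {w}, ∅, R'', {e}⟩ : IAF α).subR {e}).cert)
        (G₂ := ((⟨I.A ∪ I.Aq ∪ {w}, ∅, R'', {e}⟩ : IAF α).addR {e}).cert)
        e.1 e.2 rfl hatt Set.inter_subset_right ?_ (Or.inr rfl) ?_ (S ∪ {w})
        (Or.inr rfl)
      · rintro z ⟨hz, -⟩
        rcases hz with hz | hz
        · exact hwnotR z hz
        · rw [Set.mem_singleton_iff] at hz
          exact hew2 (congrArg Prod.snd hz).symm
      · rcases hdead with h | h
        · exact Or.inr ⟨h, Or.inr rfl, Or.inl heB.1⟩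
        · exact Or.inl ⟨h, Or.inr rfl, Or.inl heB.2⟩
    exact fun σ => (hdx σ).symm
  · -- no dead endpoint: build the partial completion of I
    right
    push_neg at hdead
    obtain ⟨hnd1, hnd2⟩ := hdead
    set A' : Set α := {a | a ∈ I.A ∪ I.Aq ∧ (w, a) ∉ R''} with hA'def
    set R' : Set (α × α) := R'' ∩ (I.R ∪ I.Rq) ∩ A' ×ˢ A' with hR'def
    have hA'B : A' ⊆ I.A ∪ I.Aq := fun a ha => ha.1
    have heA' : e ∈ A' ×ˢ A' := ⟨⟨heB.1, hnd1⟩, ⟨heB.2, hnd2⟩⟩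
    have hagree0 : ∀ p : α × α, p.1 ∈ A' → p.2 ∈ A' → (p ∈ R'' ↔ p ∈ R') := by
      intro p hp1 hp2
      constructor
      · intro hp
        refine ⟨⟨hp, ?_⟩, hp1, hp2⟩
        rcases hR2 hp with h | h | h
        · exact Or.inl h
        · exact Or.inr h
        · obtain ⟨a, haq, heq⟩ := h
          have hpw : p.1 = w := by rw [heq]
          exact absurd (hpw ▸ hA'B hp1) hw
      · exact fun hp => hp.1.1
    have hwD0 : ∀ d ∈ I.A ∪ I.Aq, d ∉ A' → (w, d) ∈ R'' := by
      intro d hd hd'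
      by_contra h
      exact hd' ⟨hd, h⟩
    have hwonlyR : ∀ z, (w, z) ∈ R'' → z ∈ I.A ∪ I.Aq ∧ z ∉ A' := by
      intro z hz
      exact ⟨Or.inr (hWonly z hz), fun h => h.2 hz⟩
    refine ⟨⟨A', ∅, R', {e}⟩,
      ⟨⟨Set.disjoint_empty _, Set.disjoint_singleton_right.mpr (fun h => henR'' h.1.1), ?_, ?_⟩,
        ?_, hA'B, ?_, fun p hp => hp.1.2, Set.empty_subset _,
        Set.singleton_subset_iff.mpr he⟩,
      rfl, rfl, ?_, ?_⟩
    · rw [Set.union_empty]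
      exact Set.inter_subset_right
    · rw [Set.union_empty]
      exact Set.singleton_subset_iff.mpr heA'
    · -- I.A ⊆ A'
      intro a ha
      refine ⟨Or.inl ha, fun h => ?_⟩
      exact Set.disjoint_left.mp hdA ha (hWonly a h)
    · -- I.R ∩ (A' ∪ ∅)² ⊆ R'
      rintro p ⟨hp, hp1, hp2⟩
      rw [Set.union_empty] at hp1 hp2
      exact ⟨⟨hIRsub hp, Or.inl hp⟩, hp1, hp2⟩
    · -- addR equivalence
      have := core_ext' (I.A ∪ I.Aq) A' w R' R'' {e} S hw hA'B hS hagree0 hwD0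
        (by rintro z (hz | hz)
            · exact hwnotR z hz
            · rw [Set.mem_singleton_iff] at hz
              exact hew2 (congrArg Prod.snd hz).symm)
        (by rintro z (hz | hz)
            · exact hwonlyR z hz
            · rw [Set.mem_singleton_iff] at hz
              exact absurd (congrArg Prod.fst hz).symm hew1)
      exact this
    · -- subR equivalence
      have := core_ext' (I.A ∪ I.Aq) A' w R' R'' ∅ S hw hA'B hS hagree0 hwD0
        (by rintro z (hz | hz)
            · exact hwnotR z hz
            · exact hz.elim)
        (by rintro z (hz | hz)
            · exact hwonlyR z hz
            · exact hz.elim)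
      simp only [Set.union_empty] at this
      exact this

end Bwd

/-- reduction to an AtIAF preserves relevance of uncertain attacks. -/
theorem stmt1 {α : Type u} (I : IAF α) (S : Set α) (j : VStatus) (w : α)
    (hWF : I.WF) (hS : S ⊆ I.A ∪ I.Aq) (hw : w ∉ I.A ∪ I.Aq)
    (Iatt : IAF α)
    (hIatt : Iatt = ⟨I.A ∪ I.Aq ∪ {w}, ∅, I.R, I.Rq ∪ {p | ∃ a ∈ I.Aq, p = (w, a)}⟩) :
    ∀ e ∈ I.Rq,
      (Elem.att e ∈ REplus I S j ↔ Elem.att e ∈ REplus Iatt (S ∪ {w}) j) ∧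
      (Elem.att e ∈ REminus I S j ↔ Elem.att e ∈ REminus Iatt (S ∪ {w}) j) := by
  subst hIatt
  intro e he
  constructor
  · constructor
    · rintro ⟨he', I', hP, ⟨h1, h2⟩, hst1, hst2⟩
      obtain ⟨I'', hP'', h1'', h2'', hadd, hsub⟩ := fwd I S w hWF hS hw e he I' hP h1 h2
      exact ⟨Or.inl he, I'', hP'', ⟨h1'', h2''⟩,
        (hasStatus_iff hadd j).1 hst1, fun h => hst2 ((hasStatus_iff hsub j).2 h)⟩
    · rintro ⟨he', I'', hP'', ⟨h1'', h2''⟩, hst1, hst2⟩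
      rcases bwd I S w hWF hS hw e he I'' hP'' h1'' h2'' with
        hsame | ⟨I', hP, h1, h2, hadd, hsub⟩
      · exact absurd ((hasStatus_iff hsame j).1 hst1) hst2
      · exact ⟨he, I', hP, ⟨h1, h2⟩, (hasStatus_iff hadd j).2 hst1,
          fun h => hst2 ((hasStatus_iff hsub j).1 h)⟩
  · constructor
    · rintro ⟨he', I', hP, ⟨h1, h2⟩, hst1, hst2⟩
      obtain ⟨I'', hP'', h1'', h2'', hadd, hsub⟩ := fwd I S w hWF hS hw e he I' hP h1 h2
      exact ⟨Or.inl he, I'', hP'', ⟨h1'', h2''⟩,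
        (hasStatus_iff hsub j).1 hst1, fun h => hst2 ((hasStatus_iff hadd j).2 h)⟩
    · rintro ⟨he', I'', hP'', ⟨h1'', h2''⟩, hst1, hst2⟩
      rcases bwd I S w hWF hS hw e he I'' hP'' h1'' h2'' with
        hsame | ⟨I', hP, h1, h2, hadd, hsub⟩
      · exact absurd ((hasStatus_iff (fun σ => (hsame σ).symm) j).1 hst1) hst2
      · exact ⟨he, I', hP, ⟨h1, h2⟩, (hasStatus_iff hsub j).2 hst1,
          fun h => hst2 ((hasStatus_iff hadd j).1 h)⟩
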